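/- arXiv:2009.08222 — 2 statements merged into one kernel-verified Lean document; each statement's English description precedes it below -/
import Mathlib

section
/- Let H be a positive integer with Zeckendorf expansion H = F_{m_0} + F_{m_1} + ... + F_{m_k} and suppose k ≥ 1. Then for every ℓ with 1 ≤ ℓ ≤ k, A(H) = a_ℓ·A(x_ℓ) − ε_ℓ·a_{ℓ−1}·A(x_{ℓ+1}) + Σ_{i=1}^{ℓ} a_{i−1}·f(t_i)·2^{m_{i−1} − 2t_i}. -/
open scoped BigOperators
open Filter Topology

/-- A natural number is a Fibonacci number, i.e. equals `F m` for some `m ≥ 1`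
(with `F 1 = F 2 = 1`). -/
def IsFibNum (x : ℕ) : Prop := ∃ m : ℕ, 0 < m ∧ Nat.fib m = x

/-- `R n` counts the partitions of `n` into distinct Fibonacci numbers:
the number of finite sets of Fibonacci numbers with sum `n` (so `R 0 = 1`). -/
noncomputable def R (n : ℕ) : ℕ :=
  Nat.card {S : Finset ℕ // (∀ x ∈ S, IsFibNum x) ∧ (∑ x ∈ S, x) = n}

/-- The summatory function `A H = ∑_{n=0}^{H} R n`. -/
noncomputable def A (H : ℕ) : ℕ := ∑ n ∈ Finset.range (H + 1), R n

/-- `f t = 1 + 2(4^{t-1} - 1)/3` (an integer for `t ≥ 1`). -/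
def fInt (t : ℕ) : ℤ := 1 + 2 * (4 ^ (t - 1) - 1) / 3


open Finset
open Finset




open scoped Classical in
noncomputable def fibIdx (x : ℕ) : ℕ :=
  if h : ∃ m, 2 ≤ m ∧ Nat.fib m = x then h.choose else 0

lemma fibIdx_spec {x : ℕ} (hx : IsFibNum x) :
    2 ≤ fibIdx x ∧ Nat.fib (fibIdx x) = x := by
  obtain ⟨m, hm, hfib⟩ := hx
  have h : ∃ m, 2 ≤ m ∧ Nat.fib m = x := by
    rcases Nat.lt_or_ge m 2 with h2 | h2
    · interval_cases m
      exact ⟨2, le_refl 2, by rw [show Nat.fib 2 = Nat.fib 1 from rfl]; exact hfib⟩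
    · exact ⟨m, h2, hfib⟩
  classical
  rw [fibIdx, dif_pos h]
  exact h.choose_spec

lemma fib_inj_ge_two {i i' : ℕ} (hi : 2 ≤ i) (hi' : 2 ≤ i')
    (h : Nat.fib i = Nat.fib i') : i = i' :=
  Nat.fib_strictMonoOn.injOn hi hi' h

lemma R_eq_card (n j : ℕ) (hn : n < Nat.fib (j + 1)) :
    R n = ((Finset.Icc 2 j).powerset.filter (fun T => ∑ i ∈ T, Nat.fib i = n)).card := by
  classical
  set s := ((Finset.Icc 2 j).powerset.filter (fun T => ∑ i ∈ T, Nat.fib i = n)) with hs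
  have key : ∀ T ∈ s, (∀ x ∈ T.image Nat.fib, IsFibNum x) ∧ (∑ x ∈ T.image Nat.fib, x) = n := by
    intro T hT
    simp only [hs, Finset.mem_filter, Finset.mem_powerset] at hT
    obtain ⟨hsub, hsum⟩ := hT
    have h2 : ∀ i ∈ T, 2 ≤ i := fun i hi => (Finset.mem_Icc.1 (hsub hi)).1
    constructor
    · intro y hy
      obtain ⟨i, hi, rfl⟩ := Finset.mem_image.1 hy
      exact ⟨i, by have := h2 i hi; omega, rfl⟩
    · rw [Finset.sum_image (fun i hi i' hi' h => fib_inj_ge_two (h2 i hi) (h2 i' hi') h)]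
      exact hsum
  have hf : Function.Bijective (fun (T : {T // T ∈ s}) =>
      (⟨T.1.image Nat.fib, key T.1 T.2⟩ :
        {S : Finset ℕ // (∀ x ∈ S, IsFibNum x) ∧ (∑ x ∈ S, x) = n})) := by
    constructor
    · rintro ⟨T1, h1⟩ ⟨T2, h2⟩ heq
      simp only [Subtype.mk_eq_mk] at heq ⊢
      have g1 : ∀ i ∈ T1, 2 ≤ i := by
        intro i hi
        simp only [hs, Finset.mem_filter, Finset.mem_powerset] at h1
        exact (Finset.mem_Icc.1 (h1.1 hi)).1
      have g2 : ∀ i ∈ T2, 2 ≤ i := by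
        intro i hi
        simp only [hs, Finset.mem_filter, Finset.mem_powerset] at h2
        exact (Finset.mem_Icc.1 (h2.1 hi)).1
      ext i
      constructor
      · intro hi
        have : Nat.fib i ∈ T2.image Nat.fib := heq ▸ Finset.mem_image_of_mem _ hi
        obtain ⟨i', hi', hfe⟩ := Finset.mem_image.1 this
        rwa [fib_inj_ge_two (g2 i' hi') (g1 i hi) hfe] at hi'
      · intro hi
        have : Nat.fib i ∈ T1.image Nat.fib := heq ▸ Finset.mem_image_of_mem _ hi
        obtain ⟨i', hi', hfe⟩ := Finset.mem_image.1 this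
        rwa [fib_inj_ge_two (g1 i' hi') (g2 i hi) hfe] at hi'
    · rintro ⟨S, hall, hsum⟩
      have hspec : ∀ x ∈ S, 2 ≤ fibIdx x ∧ Nat.fib (fibIdx x) = x :=
        fun x hx => fibIdx_spec (hall x hx)
      have hinj : ∀ x ∈ S, ∀ y ∈ S, fibIdx x = fibIdx y → x = y := by
        intro x hx y hy h
        rw [← (hspec x hx).2, ← (hspec y hy).2, h]
      have hTsub : S.image fibIdx ∈ s := by
        simp only [hs, Finset.mem_filter, Finset.mem_powerset]
        constructor
        · intro i hi
          obtain ⟨x, hx, rfl⟩ := Finset.mem_image.1 hi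
          refine Finset.mem_Icc.2 ⟨(hspec x hx).1, ?_⟩
          by_contra hgt
          push_neg at hgt
          have h1 : Nat.fib (j + 1) ≤ Nat.fib (fibIdx x) := Nat.fib_mono (by omega)
          have h2 : x ≤ ∑ y ∈ S, y := Finset.single_le_sum (f := fun y => y) (fun _ _ => Nat.zero_le _) hx
          have := (hspec x hx).2
          omega
        · rw [Finset.sum_image hinj]
          rw [Finset.sum_congr rfl (fun x hx => (hspec x hx).2)]
          exact hsum
      refine ⟨⟨S.image fibIdx, hTsub⟩, ?_⟩
      simp only [Subtype.mk_eq_mk]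
      rw [Finset.image_image]
      have him : Finset.image (Nat.fib ∘ fibIdx) S = Finset.image id S :=
        Finset.image_congr (fun x hx => (hspec x hx).2)
      rw [him, Finset.image_id]
  have := Nat.card_eq_of_bijective _ hf
  rw [R, ← this, Nat.card_eq_finsetCard]

noncomputable def Ns (j B : ℕ) : ℕ :=
  ((Finset.Icc 2 j).powerset.filter (fun T => ∑ i ∈ T, Nat.fib i ≤ B)).card

lemma A_eq_Ns (H j : ℕ) (hH : H < Nat.fib (j + 1)) : A H = Ns j H := by
  classical
  rw [A, Ns]
  rw [Finset.card_eq_sum_card_fiberwise (f := fun T => ∑ i ∈ T, Nat.fib i)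
    (t := Finset.range (H + 1)) (fun T hT => by
      simp only [Finset.mem_coe, Finset.mem_filter] at hT
      beta_reduce
      exact Finset.mem_range.2 (by omega))]
  refine Finset.sum_congr rfl (fun n hn => ?_)
  have hb : n ≤ H := by simpa [Nat.lt_succ_iff] using hn
  rw [R_eq_card n j (by omega)]
  congr 1
  rw [Finset.filter_filter]
  refine Finset.filter_congr (fun T hT => ?_)
  beta_reduce
  omega

open Finset


lemma sum_fib_Icc (j : ℕ) (hj : 1 ≤ j) :
    (∑ i ∈ Finset.Icc 2 j, Nat.fib i) + 2 = Nat.fib (j + 2) := by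
  have h := Nat.fib_succ_eq_succ_sum (j + 1)
  have hicc : Finset.Icc 2 j = Finset.Ico 2 (j + 1) := by
    ext i; simp [Nat.lt_succ_iff]
  have hsplit : (∑ i ∈ Finset.Ico 0 2, Nat.fib i) + ∑ i ∈ Finset.Ico 2 (j + 1), Nat.fib i
      = ∑ i ∈ Finset.Ico 0 (j + 1), Nat.fib i :=
    Finset.sum_Ico_consecutive _ (by omega) (by omega)
  rw [← Finset.range_eq_Ico] at hsplit
  have h2 : (∑ i ∈ Finset.range 2, Nat.fib i) = 1 := by decide
  have h3 : Nat.fib (j + 1 + 1) = Nat.fib (j + 2) := rfl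
  rw [hicc]
  have h4 : ∑ i ∈ Finset.Ico 0 (j + 1), Nat.fib i = ∑ i ∈ Finset.range (j + 1), Nat.fib i := by
    rw [Finset.range_eq_Ico]
  omega

lemma Ns_full (j B : ℕ) (hj : 1 ≤ j) (h : Nat.fib (j + 2) ≤ B + 2) :
    Ns j B = 2 ^ (j - 1) := by
  have heq : ((Finset.Icc 2 j).powerset.filter (fun T => ∑ i ∈ T, Nat.fib i ≤ B))
      = (Finset.Icc 2 j).powerset := by
    refine Finset.filter_true_of_mem (fun T hT => ?_)
    have hsub : T ⊆ Finset.Icc 2 j := Finset.mem_powerset.1 hT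
    have := Finset.sum_le_sum_of_subset (f := Nat.fib) hsub
    have h2 := sum_fib_Icc j hj
    omega
  have hc : j + 1 - 2 = j - 1 := by omega
  rw [Ns, heq, Finset.card_powerset, Nat.card_Icc, hc]

lemma Ns_split (j B : ℕ) (hj : 1 ≤ j) (hle : Nat.fib (j + 1) ≤ B) :
    Ns (j + 1) B = Ns j B + Ns j (B - Nat.fib (j + 1)) := by
  classical
  have hnotmem : (j + 1) ∉ Finset.Icc 2 j := by simp
  have hins : Finset.Icc 2 (j + 1) = insert (j + 1) (Finset.Icc 2 j) := by
    ext i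
    simp only [Finset.mem_Icc, Finset.mem_insert]
    omega
  rw [Ns, hins, Finset.powerset_insert, Finset.filter_union,
    Finset.card_union_of_disjoint]
  · congr 1
    rw [Finset.filter_image, Finset.card_image_of_injOn]
    · rw [Ns]
      congr 1
      refine Finset.filter_congr (fun T hT => ?_)
      have hTsub : T ⊆ Finset.Icc 2 j := Finset.mem_powerset.1 hT
      have hnT : (j + 1) ∉ T := fun hc => hnotmem (hTsub hc)
      simp only [Function.comp_apply, Finset.sum_insert hnT, eq_iff_iff]
      omega
    · intro T1 h1 T2 h2 heq
      simp only [Finset.coe_filter, Set.mem_setOf_eq, Finset.mem_powerset] at h1 h2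
      have n1 : (j+1) ∉ T1 := fun hc => hnotmem (h1.1 hc)
      have n2 : (j+1) ∉ T2 := fun hc => hnotmem (h2.1 hc)
      have := congrArg (Finset.erase · (j+1)) heq
      simpa [Finset.erase_insert, n1, n2] using this
  · rw [Finset.disjoint_left]
    intro T hT1 hT2
    simp only [Finset.mem_filter, Finset.mem_powerset, Finset.mem_image] at hT1 hT2
    have : (j+1) ∉ T := fun hc => hnotmem (hT1.1 hc)
    obtain ⟨T', hT', rfl⟩ := hT2.1
    exact this (Finset.mem_insert_self _ _)

lemma Ns_skip (j B : ℕ) (h : B < Nat.fib (j + 1)) :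
    Ns (j + 1) B = Ns j B := by
  classical
  rw [Ns, Ns]
  congr 1
  ext T
  simp only [Finset.mem_filter, Finset.mem_powerset]
  constructor
  · rintro ⟨hsub, hsum⟩
    refine ⟨fun i hi => ?_, hsum⟩
    have hmem := hsub hi
    simp only [Finset.mem_Icc] at hmem ⊢
    rcases Nat.lt_or_ge i (j + 1) with hlt | hge
    · omega
    · exfalso
      have h1 : Nat.fib (j + 1) ≤ Nat.fib i := Nat.fib_mono (by omega)
      have h2 : Nat.fib i ≤ ∑ x ∈ T, Nat.fib x := Finset.single_le_sum (fun _ _ => Nat.zero_le _) hi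
      omega
  · rintro ⟨hsub, hsum⟩
    exact ⟨hsub.trans (Finset.Icc_subset_Icc_right (by omega)), hsum⟩


lemma three_dvd (n : ℕ) : (3:ℤ) ∣ 4 ^ n - 1 := by
  induction n with
  | zero => simp
  | succ n ih =>
    have : (4:ℤ) ^ (n+1) - 1 = 4 * (4 ^ n - 1) + 3 := by ring
    rw [this]
    exact dvd_add (Dvd.dvd.mul_left ih 4) (dvd_refl 3)

lemma three_fInt (t : ℕ) : 3 * fInt t = 2 * 4 ^ (t - 1) + 1 := by
  obtain ⟨d, hd⟩ := three_dvd (t - 1)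
  rw [fInt, hd]
  have h1 : 2 * (3 * d) / 3 = 2 * d := by
    rw [show 2 * (3 * d) = 3 * (2 * d) by ring, Int.mul_ediv_cancel_left _ (by norm_num)]
  rw [h1]
  have h4 : (4:ℤ) ^ (t-1) = 3 * d + 1 := by omega
  rw [h4]; ring

lemma fInt_two : fInt 2 = 3 := by norm_num [fInt]

lemma fInt_succ (t : ℕ) (h : 1 ≤ t) : fInt (t + 1) = fInt t + 2 ^ (2 * t - 1) := by
  obtain ⟨s, rfl⟩ := Nat.exists_eq_add_of_le h
  have h1 := three_fInt (1 + s)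
  have h2 := three_fInt (1 + s + 1)
  have e1 : 1 + s - 1 = s := by omega
  have e2 : 1 + s + 1 - 1 = s + 1 := by omega
  have e3 : 2 * (1 + s) - 1 = 2 * s + 1 := by omega
  rw [e1] at h1; rw [e2] at h2; rw [e3]
  have h4 : (4:ℤ) ^ (s+1) = 4 * 4 ^ s := by ring
  have h5 : (2:ℤ) ^ (2*s+1) = 2 * 4 ^ s := by
    rw [pow_succ, pow_mul]; norm_num; ring
  rw [h4] at h2
  omega

lemma fib_rec (a : ℕ) : Nat.fib (a + 2) = Nat.fib a + Nat.fib (a + 1) := Nat.fib_add_two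

lemma baseRec (g : ℕ) (hg : 2 ≤ g) : ∀ mx x₂ : ℕ, 2 ≤ mx → x₂ < Nat.fib (mx - 1) →
    (A (Nat.fib (mx + g) + (Nat.fib mx + x₂)) : ℤ)
      = (((g + 2) / 2 : ℕ) : ℤ) * (A (Nat.fib mx + x₂) : ℤ)
        - (2 * (((g + 2) / 2 : ℕ) : ℤ) - 1 - (g : ℤ)) * (A x₂ : ℤ)
        + fInt ((g + 2) / 2) * 2 ^ (mx + g - 2 * ((g + 2) / 2)) := by
  induction g using Nat.strong_induction_on with
  | _ g IH =>
  intro mx x₂ hmx hx₂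
  obtain ⟨n, rfl⟩ : ∃ n, mx = n + 2 := ⟨mx - 2, by omega⟩
  set x := Nat.fib (n + 2) + x₂ with hxdef
  have hx2lt : x₂ < Nat.fib (n + 1) := by
    have : n + 2 - 1 = n + 1 := by omega
    rwa [this] at hx₂
  have hf2 : Nat.fib (n + 2) = Nat.fib n + Nat.fib (n + 1) := fib_rec n
  have hf3 : Nat.fib (n + 3) = Nat.fib (n + 1) + Nat.fib (n + 2) := fib_rec (n + 1)
  have hf4 : Nat.fib (n + 4) = Nat.fib (n + 2) + Nat.fib (n + 3) := fib_rec (n + 2)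
  have hf5 : Nat.fib (n + 5) = Nat.fib (n + 3) + Nat.fib (n + 4) := fib_rec (n + 3)
  have hpos : 1 ≤ Nat.fib (n + 1) := Nat.fib_pos.2 (by omega)
  have hxlt : x < Nat.fib (n + 3) := by omega
  have hfibx : Nat.fib (n + 2) ≤ x := Nat.le_add_right _ _
  match g, hg with
  | 2, _ =>
    set B := Nat.fib (n + 4) + x with hBdef
    have h1 : A B = Ns (n + 4) B := A_eq_Ns B (n + 4) (by show B < Nat.fib (n + 5); omega)
    have h2 : Ns (n + 4) B = Ns (n + 3) B + Ns (n + 3) x := by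
      have h := Ns_split (n + 3) B (by omega) (by show Nat.fib (n + 4) ≤ B; omega)
      have hsub : B - Nat.fib (n + 4) = x := by omega
      exact hsub ▸ h
    have h3 : Ns (n + 3) x = A x := (A_eq_Ns x (n + 3) (by show x < Nat.fib (n + 4); omega)).symm
    have h4 : Ns (n + 3) B = Ns (n + 2) B + Ns (n + 2) (Nat.fib (n + 2) + x) := by
      have h := Ns_split (n + 2) B (by omega) (by show Nat.fib (n + 3) ≤ B; omega)
      have hsub : B - Nat.fib (n + 3) = Nat.fib (n + 2) + x := by omega
      exact hsub ▸ h
    have h5 : Ns (n + 2) B = 2 ^ (n + 1) := by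
      have h := Ns_full (n + 2) B (by omega) (by show Nat.fib (n + 4) ≤ B + 2; omega)
      exact h
    have h6 : Ns (n + 2) (Nat.fib (n + 2) + x)
        = Ns (n + 1) (Nat.fib (n + 2) + x) + Ns (n + 1) x := by
      have h : Ns (n + 2) (Nat.fib (n + 2) + x) = Ns (n + 1) (Nat.fib (n + 2) + x)
          + Ns (n + 1) (Nat.fib (n + 2) + x - Nat.fib (n + 2)) :=
        Ns_split (n + 1) (Nat.fib (n + 2) + x) (by omega)
          (by show Nat.fib (n + 2) ≤ Nat.fib (n + 2) + x; omega)
      have hsub : Nat.fib (n + 2) + x - Nat.fib (n + 2) = x := by omega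
      rw [hsub] at h
      exact h
    have h7 : Ns (n + 1) (Nat.fib (n + 2) + x) = 2 ^ n := by
      have h := Ns_full (n + 1) (Nat.fib (n + 2) + x) (by omega)
        (by show Nat.fib (n + 3) ≤ Nat.fib (n + 2) + x + 2; omega)
      exact h
    have h8 : A x = Ns (n + 1) x + A x₂ := by
      have e1 : A x = Ns (n + 2) x := A_eq_Ns x (n + 2) (by show x < Nat.fib (n + 3); omega)
      have e2 : Ns (n + 2) x = Ns (n + 1) x + Ns (n + 1) (x - Nat.fib (n + 2)) :=
        Ns_split (n + 1) x (by omega) (by show Nat.fib (n + 2) ≤ x; omega)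
      have e3 : x - Nat.fib (n + 2) = x₂ := by omega
      have e4 : Ns (n + 1) x₂ = A x₂ :=
        (A_eq_Ns x₂ (n + 1) (by show x₂ < Nat.fib (n + 2); omega)).symm
      rw [e1, e2, e3, e4]
    have hTot : A B + A x₂ = 2 * A x + 2 ^ (n + 1) + 2 ^ n := by omega
    have ht : ((2 + 2) / 2 : ℕ) = 2 := by norm_num
    have hexp : n + 2 + 2 - 2 * ((2 + 2) / 2) = n := by omega
    rw [ht, hexp, fInt_two]
    have hc : ((A B : ℤ) + A x₂ : ℤ) = 2 * A x + 2 ^ (n + 1) + 2 ^ n := by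
      exact_mod_cast congrArg (Nat.cast : ℕ → ℤ) hTot
    have hp : (2:ℤ) ^ (n + 1) = 2 * 2 ^ n := by ring
    show (A B : ℤ) = 2 * (A x : ℤ) - (2 * (2:ℤ) - 1 - 2) * (A x₂ : ℤ) + 3 * 2 ^ n
    linarith
  | 3, _ =>
    set B := Nat.fib (n + 5) + x with hBdef
    have hf6 : Nat.fib (n + 6) = Nat.fib (n + 4) + Nat.fib (n + 5) := fib_rec (n + 4)
    have h1 : A B = Ns (n + 5) B := A_eq_Ns B (n + 5) (by show B < Nat.fib (n + 6); omega)
    have h2 : Ns (n + 5) B = Ns (n + 4) B + Ns (n + 4) x := by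
      have h := Ns_split (n + 4) B (by omega) (by show Nat.fib (n + 5) ≤ B; omega)
      have hsub : B - Nat.fib (n + 5) = x := by omega
      exact hsub ▸ h
    have h3 : Ns (n + 4) x = A x := (A_eq_Ns x (n + 4) (by show x < Nat.fib (n + 5); omega)).symm
    have h4 : Ns (n + 4) B = Ns (n + 3) B + Ns (n + 3) (Nat.fib (n + 3) + x) := by
      have h := Ns_split (n + 3) B (by omega) (by show Nat.fib (n + 4) ≤ B; omega)
      have hsub : B - Nat.fib (n + 4) = Nat.fib (n + 3) + x := by omega
      exact hsub ▸ h
    have h5 : Ns (n + 3) B = 2 ^ (n + 2) := by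
      have h := Ns_full (n + 3) B (by omega) (by show Nat.fib (n + 5) ≤ B + 2; omega)
      exact h
    have h6 : Ns (n + 3) (Nat.fib (n + 3) + x)
        = Ns (n + 2) (Nat.fib (n + 3) + x) + Ns (n + 2) x := by
      have h : Ns (n + 3) (Nat.fib (n + 3) + x) = Ns (n + 2) (Nat.fib (n + 3) + x)
          + Ns (n + 2) (Nat.fib (n + 3) + x - Nat.fib (n + 3)) :=
        Ns_split (n + 2) (Nat.fib (n + 3) + x) (by omega)
          (by show Nat.fib (n + 3) ≤ Nat.fib (n + 3) + x; omega)
      have hsub : Nat.fib (n + 3) + x - Nat.fib (n + 3) = x := by omega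
      rw [hsub] at h
      exact h
    have h7 : Ns (n + 2) (Nat.fib (n + 3) + x) = 2 ^ (n + 1) := by
      have h := Ns_full (n + 2) (Nat.fib (n + 3) + x) (by omega)
        (by show Nat.fib (n + 4) ≤ Nat.fib (n + 3) + x + 2; omega)
      exact h
    have h8 : Ns (n + 2) x = A x := (A_eq_Ns x (n + 2) (by show x < Nat.fib (n + 3); omega)).symm
    have hTot : A B = 2 * A x + 2 ^ (n + 2) + 2 ^ (n + 1) := by omega
    have ht : ((3 + 2) / 2 : ℕ) = 2 := by norm_num
    have hexp : n + 2 + 3 - 2 * ((3 + 2) / 2) = n + 1 := by omega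
    rw [ht, hexp, fInt_two]
    have hc : (A B : ℤ) = 2 * A x + 2 ^ (n + 2) + 2 ^ (n + 1) := by
      exact_mod_cast congrArg (Nat.cast : ℕ → ℤ) hTot
    have hp : (2:ℤ) ^ (n + 2) = 2 * 2 ^ (n + 1) := by ring
    show (A B : ℤ) = 2 * (A x : ℤ) - (2 * (2:ℤ) - 1 - 3) * (A x₂ : ℤ) + 3 * 2 ^ (n + 1)
    linarith
  | (g₀ + 4), _ =>
    have hIH := IH (g₀ + 2) (by omega) (by omega) (n + 2) x₂ hmx hx₂
    set t' : ℕ := (g₀ + 4) / 2 with ht'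
    have ht'2 : 2 ≤ t' := by omega
    have ht'le : 2 * t' ≤ g₀ + 4 := by omega
    set B := Nat.fib (n + g₀ + 6) + x with hBdef
    have hBeq : Nat.fib (n + 2 + (g₀ + 4)) + (Nat.fib (n + 2) + x₂) = B := by
      rw [show n + 2 + (g₀ + 4) = n + g₀ + 6 by omega]
    rw [hBeq]
    have hgm2 : Nat.fib (n + g₀ + 4) = Nat.fib (n + g₀ + 2) + Nat.fib (n + g₀ + 3) :=
      fib_rec (n + g₀ + 2)
    have hgm3 : Nat.fib (n + g₀ + 5) = Nat.fib (n + g₀ + 3) + Nat.fib (n + g₀ + 4) :=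
      fib_rec (n + g₀ + 3)
    have hgm4 : Nat.fib (n + g₀ + 6) = Nat.fib (n + g₀ + 4) + Nat.fib (n + g₀ + 5) :=
      fib_rec (n + g₀ + 4)
    have hgm5 : Nat.fib (n + g₀ + 7) = Nat.fib (n + g₀ + 5) + Nat.fib (n + g₀ + 6) :=
      fib_rec (n + g₀ + 5)
    have hmono : Nat.fib (n + 3) ≤ Nat.fib (n + g₀ + 3) := Nat.fib_mono (by omega)
    have hxlt' : x < Nat.fib (n + g₀ + 3) := by omega
    have h1 : A B = Ns (n + g₀ + 6) B :=
      A_eq_Ns B (n + g₀ + 6) (by show B < Nat.fib (n + g₀ + 7); omega)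
    have h2 : Ns (n + g₀ + 6) B = Ns (n + g₀ + 5) B + Ns (n + g₀ + 5) x := by
      have h : Ns (n + g₀ + 6) B = Ns (n + g₀ + 5) B
          + Ns (n + g₀ + 5) (B - Nat.fib (n + g₀ + 6)) :=
        Ns_split (n + g₀ + 5) B (by omega) (by show Nat.fib (n + g₀ + 6) ≤ B; omega)
      have hsub : B - Nat.fib (n + g₀ + 6) = x := by omega
      rw [hsub] at h
      exact h
    have h3 : Ns (n + g₀ + 5) x = A x :=
      (A_eq_Ns x (n + g₀ + 5) (by show x < Nat.fib (n + g₀ + 6); omega)).symm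
    have h4 : Ns (n + g₀ + 5) B = Ns (n + g₀ + 4) B
        + Ns (n + g₀ + 4) (Nat.fib (n + g₀ + 4) + x) := by
      have h : Ns (n + g₀ + 5) B = Ns (n + g₀ + 4) B
          + Ns (n + g₀ + 4) (B - Nat.fib (n + g₀ + 5)) :=
        Ns_split (n + g₀ + 4) B (by omega) (by show Nat.fib (n + g₀ + 5) ≤ B; omega)
      have hsub : B - Nat.fib (n + g₀ + 5) = Nat.fib (n + g₀ + 4) + x := by omega
      rw [hsub] at h
      exact h
    have h5 : Ns (n + g₀ + 4) B = 2 ^ (n + g₀ + 3) := by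
      have h := Ns_full (n + g₀ + 4) B (by omega)
        (by show Nat.fib (n + g₀ + 6) ≤ B + 2; omega)
      exact h
    have h6 : Ns (n + g₀ + 4) (Nat.fib (n + g₀ + 4) + x) = A (Nat.fib (n + g₀ + 4) + x) :=
      (A_eq_Ns (Nat.fib (n + g₀ + 4) + x) (n + g₀ + 4)
        (by show Nat.fib (n + g₀ + 4) + x < Nat.fib (n + g₀ + 5); omega)).symm
    have hTot : A B = 2 ^ (n + g₀ + 3) + A x + A (Nat.fib (n + g₀ + 4) + x) := by omega
    -- massage IH
    rw [show n + 2 + (g₀ + 2) = n + g₀ + 4 by omega] at hIH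
    set e : ℕ := n + g₀ + 4 - 2 * t' with he
    -- massage the goal
    rw [show (g₀ + 4 + 2) / 2 = t' + 1 by omega,
      show n + 2 + (g₀ + 4) - 2 * (t' + 1) = e by omega]
    have hfsucc : fInt (t' + 1) = fInt t' + 2 ^ (2 * t' - 1) := fInt_succ t' (by omega)
    have hpow : (2:ℤ) ^ (2 * t' - 1) * 2 ^ e = 2 ^ (n + g₀ + 3) := by
      rw [← pow_add, show 2 * t' - 1 + e = n + g₀ + 3 by omega]
    have hc : (A B : ℤ) = 2 ^ (n + g₀ + 3) + A x + A (Nat.fib (n + g₀ + 4) + x) := by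
      exact_mod_cast congrArg (Nat.cast : ℕ → ℤ) hTot
    rw [hfsucc]
    push_cast
    push_cast at hIH hc
    linarith


/-- The general recursion (2.2) for the summatory function. -/
theorem summatory_general_recursion
    (H k : ℕ) (m x t : ℕ → ℕ) (ε a : ℕ → ℤ)
    (hH : 0 < H) (hk : 1 ≤ k)
    (hexp : H = ∑ i ∈ Finset.range (k + 1), Nat.fib (m i))
    (hgap : ∀ i : ℕ, 1 ≤ i → i ≤ k → m i + 2 ≤ m (i - 1))
    (hmk : 2 ≤ m k)
    (hx : ∀ l : ℕ, l ≤ k + 1 → x l = ∑ i ∈ Finset.Icc l k, Nat.fib (m i))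
    (ht : ∀ i : ℕ, 1 ≤ i → i ≤ k → t i = (m (i - 1) - m i + 2) / 2)
    (hε : ∀ i : ℕ, 1 ≤ i → i ≤ k →
      ε i = 2 * (t i : ℤ) - 1 - (m (i - 1) : ℤ) + (m i : ℤ))
    (ha0 : a 0 = 1)
    (ha1 : a 1 = (t 1 : ℤ))
    (ha : ∀ l : ℕ, 1 ≤ l → l ≤ k - 1 →
      a (l + 1) = (t (l + 1) : ℤ) * a l - ε l * a (l - 1)) :
    ∀ l : ℕ, 1 ≤ l → l ≤ k →
      (A H : ℤ) = a l * (A (x l) : ℤ) - ε l * a (l - 1) * (A (x (l + 1)) : ℤ)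
        + ∑ i ∈ Finset.Icc 1 l, a (i - 1) * fInt (t i) * 2 ^ (m (i - 1) - 2 * t i) := by
  -- basic structural facts
  have hm2 : ∀ l : ℕ, l ≤ k → 2 ≤ m l := by
    intro l hl
    have key : ∀ d l : ℕ, l ≤ k → k - l = d → 2 ≤ m l := by
      intro d
      induction d with
      | zero =>
        intro l hl hd
        have : l = k := by omega
        subst this; exact hmk
      | succ d ihd =>
        intro l hl hd
        have h1 : l + 1 ≤ k := by omega
        have h2 := ihd (l + 1) h1 (by omega)
        have h3 := hgap (l + 1) (by omega) h1
        have h4 : l + 1 - 1 = l := by omega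
        rw [h4] at h3
        omega
    exact key (k - l) l hl rfl
  have hxk1 : x (k + 1) = 0 := by
    rw [hx (k + 1) (by omega)]
    rw [Finset.Icc_eq_empty (by omega)]
    simp
  have hxsplit : ∀ l : ℕ, l ≤ k → x l = Nat.fib (m l) + x (l + 1) := by
    intro l hl
    rw [hx l (by omega), hx (l + 1) (by omega)]
    have hins : Finset.Icc l k = insert l (Finset.Icc (l + 1) k) := by
      ext i
      simp only [Finset.mem_Icc, Finset.mem_insert]
      omega
    rw [hins, Finset.sum_insert (by simp)]
  have hxlt : ∀ l : ℕ, l ≤ k → x l < Nat.fib (m l + 1) := by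
    intro l hl
    have key : ∀ d l : ℕ, l ≤ k → k - l = d → x l < Nat.fib (m l + 1) := by
      intro d
      induction d with
      | zero =>
        intro l hl hd
        have hlk : l = k := by omega
        subst hlk
        rw [hxsplit l (le_refl _), hxk1]
        have := Nat.fib_lt_fib_succ (n := m l) (hm2 l hl)
        omega
      | succ d ihd =>
        intro l hl hd
        have h1 : l + 1 ≤ k := by omega
        have h2 := ihd (l + 1) h1 (by omega)
        have h3 := hgap (l + 1) (by omega) h1
        rw [show l + 1 - 1 = l by omega] at h3
        have h4 : Nat.fib (m (l + 1) + 1) ≤ Nat.fib (m l - 1) := Nat.fib_mono (by omega)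
        have h5 : Nat.fib (m l + 1) = Nat.fib (m l - 1) + Nat.fib (m l) := by
          have h6 := fib_rec (m l - 1)
          have hml := hm2 l hl
          rw [show m l - 1 + 2 = m l + 1 by omega, show m l - 1 + 1 = m l by omega] at h6
          exact h6
        rw [hxsplit l hl]
        omega
    exact key (k - l) l hl rfl
  -- the one-step recursion
  have step : ∀ i : ℕ, 1 ≤ i → i ≤ k →
      (A (x (i - 1)) : ℤ) = (t i : ℤ) * (A (x i) : ℤ) - ε i * (A (x (i + 1)) : ℤ)
        + fInt (t i) * 2 ^ (m (i - 1) - 2 * t i) := by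
    intro i hi1 hik
    have hgap' := hgap i hi1 hik
    have hmi := hm2 i hik
    have hx2 : x (i + 1) < Nat.fib (m i - 1) := by
      rcases Nat.lt_or_ge i k with hik' | hik'
      · have h1 := hxlt (i + 1) (by omega)
        have h2 := hgap (i + 1) (by omega) (by omega)
        rw [show i + 1 - 1 = i by omega] at h2
        have h3 : Nat.fib (m (i + 1) + 1) ≤ Nat.fib (m i - 1) := Nat.fib_mono (by omega)
        omega
      · have : i = k := by omega
        rw [this, hxk1]
        exact Nat.fib_pos.2 (by omega)
    have hbr := baseRec (m (i - 1) - m i) (by omega) (m i) (x (i + 1)) hmi hx2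
    rw [show m i + (m (i - 1) - m i) = m (i - 1) by omega] at hbr
    rw [← hxsplit i hik] at hbr
    rw [← ht i hi1 hik] at hbr
    have hxi : x (i - 1) = Nat.fib (m (i - 1)) + x i := by
      have := hxsplit (i - 1) (by omega)
      rw [show i - 1 + 1 = i by omega] at this
      exact this
    rw [← hxi] at hbr
    have hεe : (2 * (t i : ℤ) - 1 - ((m (i - 1) - m i : ℕ) : ℤ)) = ε i := by
      rw [hε i hi1 hik]
      have : ((m (i - 1) - m i : ℕ) : ℤ) = (m (i - 1) : ℤ) - (m i : ℤ) := by
        have := hgap i hi1 hik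
        push_cast [Nat.cast_sub (by omega : m i ≤ m (i - 1))]
        ring
      rw [this]
      ring
    rw [hεe] at hbr
    exact hbr
  -- main induction
  intro l hl1 hlk
  induction l, hl1 using Nat.le_induction with
  | base =>
    have hstep := step 1 (le_refl _) hlk
    have hx0 : H = x 0 := by
      rw [hx 0 (by omega), hexp]
      congr 1
      ext i
      simp [Nat.lt_succ_iff]
    rw [hx0]
    rw [Finset.Icc_self, Finset.sum_singleton]
    rw [ha1, show (1:ℕ) - 1 = 0 from rfl, ha0]
    simpa using hstep
  | succ l hl ih =>
    have hlk' : l ≤ k := by omega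
    have ihP := ih hlk'
    have hstep := step (l + 1) (by omega) hlk
    rw [show l + 1 - 1 = l by omega] at hstep
    have hal := ha l hl (by omega)
    rw [Finset.sum_Icc_succ_top (by omega : 1 ≤ l + 1)]
    rw [show l + 1 - 1 = l by omega]
    rw [hal]
    linear_combination ihP + a l * hstep
end

section
/- As m → ∞, A(F_m + F_{m−2}) is asymptotic to (13/48)·2^m; that is, lim_{m→∞} A(F_m + F_{m−2})/2^m = 13/48. Consequently lim_{m→∞} A(F_m + F_{m−2})/(F_m + F_{m−2})^λ = 13/24. -/
open scoped BigOperators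
open Filter Topology

section FibAux
open Finset


/-- Finset of Fibonacci values F_2, ..., F_k. -/
def Vf (k : ℕ) : Finset ℕ := (Finset.Icc 2 k).image Nat.fib

/-- Number of subsets of Vf k with sum ≤ B. -/
def Ncnt (k B : ℕ) : ℕ := ((Vf k).powerset.filter (fun S => ∑ x ∈ S, x ≤ B)).card

lemma mem_Vf {k x : ℕ} : x ∈ Vf k ↔ ∃ j, 2 ≤ j ∧ j ≤ k ∧ Nat.fib j = x := by
  simp [Vf, Finset.mem_image, Finset.mem_Icc, and_assoc]

lemma Vf_pos {k x : ℕ} (hx : x ∈ Vf k) : 0 < x := by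
  obtain ⟨j, hj2, _, rfl⟩ := mem_Vf.mp hx
  exact Nat.fib_pos.mpr (by omega)

lemma card_Vf (k : ℕ) : (Vf k).card = k - 1 := by
  have h : Set.InjOn Nat.fib (Finset.Icc 2 k) := by
    intro a ha b hb hab
    simp only [Finset.coe_Icc, Set.mem_Icc] at ha hb
    exact Nat.fib_strictMonoOn.injOn (by exact ha.1) (by exact hb.1) hab
  rw [Vf, Finset.card_image_of_injOn h, Nat.card_Icc]
  omega

lemma fib_not_mem_Vf {k : ℕ} (hk : 2 ≤ k) : Nat.fib (k + 1) ∉ Vf k := by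
  intro h
  obtain ⟨j, hj2, hjk, hfib⟩ := mem_Vf.mp h
  have : Nat.fib j < Nat.fib (k + 1) :=
    Nat.fib_strictMonoOn (by exact hj2) (by exact Nat.le_trans hk (by omega)) (by omega)
  omega

lemma Vf_succ {k : ℕ} (hk : 2 ≤ k) : Vf (k + 1) = insert (Nat.fib (k + 1)) (Vf k) := by
  ext x
  simp only [mem_Vf, Finset.mem_insert]
  constructor
  · rintro ⟨j, hj2, hjk, rfl⟩
    rcases eq_or_lt_of_le hjk with h | h
    · exact Or.inl (by rw [h])
    · exact Or.inr ⟨j, hj2, by omega, rfl⟩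
  · rintro (rfl | ⟨j, hj2, hjk, rfl⟩)
    · exact ⟨k + 1, by omega, le_rfl, rfl⟩
    · exact ⟨j, hj2, by omega, rfl⟩
lemma Ncnt_le (k B : ℕ) : Ncnt k B ≤ 2 ^ k := by
  calc Ncnt k B ≤ (Vf k).powerset.card := Finset.card_filter_le _ _
    _ = 2 ^ (Vf k).card := Finset.card_powerset _
    _ ≤ 2 ^ k := Nat.pow_le_pow_right (by norm_num) (by rw [card_Vf]; omega)

lemma Ncnt_zero (k : ℕ) : Ncnt k 0 = 1 := by
  rw [Ncnt]
  rw [Finset.card_eq_one]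
  refine ⟨∅, ?_⟩
  ext S
  simp only [Finset.mem_filter, Finset.mem_powerset, Finset.mem_singleton, Nat.le_zero]
  constructor
  · rintro ⟨hS, hsum⟩
    by_contra h
    obtain ⟨x, hx⟩ := Finset.nonempty_iff_ne_empty.mpr h
    have h1 : 0 < x := Vf_pos (hS hx)
    have h2 : x ≤ ∑ y ∈ S, y := Finset.single_le_sum (fun i _ => Nat.zero_le i) hx
    omega
  · rintro rfl
    exact ⟨Finset.empty_subset _, by simp⟩

lemma Ncnt_succ_of_le {k B : ℕ} (hk : 2 ≤ k) (hB : Nat.fib (k + 1) ≤ B) :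
    Ncnt (k + 1) B = Ncnt k B + Ncnt k (B - Nat.fib (k + 1)) := by
  classical
  set a := Nat.fib (k + 1) with ha
  have hna : a ∉ Vf k := fib_not_mem_Vf hk
  rw [Ncnt, Vf_succ hk, Finset.powerset_insert, Finset.filter_union,
    Finset.card_union_of_disjoint, Finset.filter_image]
  · congr 1
    rw [Finset.card_image_of_injOn]
    · congr 1
      apply Finset.filter_congr
      intro S hS
      rw [Finset.mem_powerset] at hS
      have haS : a ∉ S := fun h => hna (hS h)
      rw [Finset.sum_insert haS]
      omega
    · intro S hS T hT hST
      simp only [Finset.coe_filter, Set.mem_setOf_eq, Finset.mem_powerset] at hS hT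
      have haS : a ∉ S := fun h => hna (hS.1 h)
      have haT : a ∉ T := fun h => hna (hT.1 h)
      rw [← Finset.erase_insert haS, ← Finset.erase_insert haT, hST]
  · rw [Finset.disjoint_left]
    intro S hS hS'
    simp only [Finset.mem_filter, Finset.mem_powerset, Finset.mem_image] at hS hS'
    obtain ⟨T, hT, rfl⟩ := hS'.1
    exact (fun h => hna (hS.1 h)) (Finset.mem_insert_self a T)

lemma Ncnt_succ_of_lt {k B : ℕ} (hk : 2 ≤ k) (hB : B < Nat.fib (k + 1)) :
    Ncnt (k + 1) B = Ncnt k B := by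
  classical
  set a := Nat.fib (k + 1) with ha
  have hna : a ∉ Vf k := fib_not_mem_Vf hk
  rw [Ncnt, Vf_succ hk, Finset.powerset_insert, Finset.filter_union,
    Finset.card_union_of_disjoint]
  · have : ((Vf k).powerset.image (insert a)).filter (fun S => ∑ x ∈ S, x ≤ B) = ∅ := by
      rw [Finset.filter_eq_empty_iff]
      intro S hS
      obtain ⟨T, hT, rfl⟩ := Finset.mem_image.mp hS
      rw [Finset.mem_powerset] at hT
      have haT : a ∉ T := fun h => hna (hT h)
      rw [Finset.sum_insert haT]
      omega
    rw [this, Finset.card_empty]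
    rfl
  · rw [Finset.disjoint_left]
    intro S hS hS'
    simp only [Finset.mem_filter, Finset.mem_powerset, Finset.mem_image] at hS hS'
    obtain ⟨T, hT, rfl⟩ := hS'.1
    exact (fun h => hna (hS.1 h)) (Finset.mem_insert_self a T)

lemma Ncnt_drop {j k B : ℕ} (hj : 2 ≤ j) (hjk : j ≤ k) (hB : B < Nat.fib (j + 1)) :
    Ncnt k B = Ncnt j B := by
  induction k with
  | zero => omega
  | succ k ih =>
    rcases Nat.lt_or_ge j (k + 1) with h | h
    · have hk2 : 2 ≤ k := by omega
      have hBk : B < Nat.fib (k + 1) :=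
        lt_of_lt_of_le hB (Nat.fib_mono (by omega))
      rw [Ncnt_succ_of_lt hk2 hBk, ih (by omega)]
    · have : j = k + 1 := by omega
      rw [this]

lemma sum_Vf {k : ℕ} (hk : 2 ≤ k) : ∑ x ∈ Vf k, x + 2 = Nat.fib (k + 2) := by
  induction k with
  | zero => omega
  | succ k ih =>
    rcases Nat.lt_or_ge k 2 with h | h
    · interval_cases k
      · omega
      · simp [Vf]
        decide
    · rw [Vf_succ h, Finset.sum_insert (fib_not_mem_Vf h)]
      have := ih h
      rw [Nat.fib_add_two (n := k + 1)]
      have h2 : Nat.fib (k + 1 + 1) = Nat.fib (k + 2) := by norm_num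
      omega
lemma Ncnt_compl {k B : ℕ} (hk : 2 ≤ k) (hB : B + 3 ≤ Nat.fib (k + 2)) :
    Ncnt k B + Ncnt k (Nat.fib (k + 2) - 3 - B) = 2 ^ (k - 1) := by
  classical
  have hT : ∑ x ∈ Vf k, x + 2 = Nat.fib (k + 2) := sum_Vf hk
  have hcard : (Vf k).powerset.card = 2 ^ (k - 1) := by
    rw [Finset.card_powerset, card_Vf]
  rw [← hcard, ← Finset.card_filter_add_card_filter_not
    (s := (Vf k).powerset) (p := fun S => ∑ x ∈ S, x ≤ B)]
  congr 1
  apply Finset.card_bij' (fun S _ => Vf k \ S) (fun S _ => Vf k \ S)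
  · intro S hS
    simp only [Finset.mem_filter, Finset.mem_powerset, not_le] at hS ⊢
    obtain ⟨hsub, hsum⟩ := hS
    have h1 : ∑ x ∈ Vf k \ S, x + ∑ x ∈ S, x = ∑ x ∈ Vf k, x := Finset.sum_sdiff hsub
    exact ⟨Finset.sdiff_subset, by omega⟩
  · intro S hS
    simp only [Finset.mem_filter, Finset.mem_powerset, not_le] at hS ⊢
    obtain ⟨hsub, hsum⟩ := hS
    have h1 : ∑ x ∈ Vf k \ S, x + ∑ x ∈ S, x = ∑ x ∈ Vf k, x := Finset.sum_sdiff hsub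
    exact ⟨Finset.sdiff_subset, by omega⟩
  · intro S hS
    simp only [Finset.mem_filter, Finset.mem_powerset] at hS
    exact Finset.sdiff_sdiff_eq_self hS.1
  · intro S hS
    simp only [Finset.mem_filter, Finset.mem_powerset] at hS
    exact Finset.sdiff_sdiff_eq_self hS.1
lemma R_eq {n k : ℕ} (hk : 2 ≤ k) (hn : n < Nat.fib (k + 1)) :
    R n = ((Vf k).powerset.filter (fun S => ∑ x ∈ S, x = n)).card := by
  classical
  have hiff : ∀ S : Finset ℕ,
      ((∀ x ∈ S, IsFibNum x) ∧ ∑ x ∈ S, x = n) ↔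
        S ∈ (Vf k).powerset.filter (fun S => ∑ x ∈ S, x = n) := by
    intro S
    simp only [Finset.mem_filter, Finset.mem_powerset]
    constructor
    · rintro ⟨hfib, rfl⟩
      refine ⟨fun x hx => ?_, rfl⟩
      obtain ⟨m, hm, rfl⟩ := hfib x hx
      have hxn : Nat.fib m ≤ ∑ x ∈ S, x :=
        Finset.single_le_sum (fun i _ => Nat.zero_le i) hx
      have hfj : Nat.fib (max m 2) = Nat.fib m := by
        rcases Nat.lt_or_ge m 2 with h | h
        · have h1 : m = 1 := by omega
          have h2 : max m 2 = 2 := by omega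
          rw [h1] at h2 ⊢
          rw [h2]
          rfl
        · have h2 : max m 2 = m := by omega
          rw [h2]
      rw [mem_Vf]
      refine ⟨max m 2, le_max_right _ _, ?_, hfj⟩
      by_contra h
      have : Nat.fib (k + 1) ≤ Nat.fib (max m 2) := Nat.fib_mono (by omega)
      omega
    · rintro ⟨hsub, rfl⟩
      refine ⟨fun x hx => ?_, rfl⟩
      obtain ⟨j, hj2, _, rfl⟩ := mem_Vf.mp (hsub hx)
      exact ⟨j, by omega, rfl⟩
  rw [R, Nat.card_congr (Equiv.subtypeEquivRight hiff), Nat.card_eq_finsetCard]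

lemma A_eq {H k : ℕ} (hk : 2 ≤ k) (hH : H < Nat.fib (k + 1)) : A H = Ncnt k H := by
  classical
  rw [Ncnt, Finset.card_eq_sum_card_fiberwise
    (f := fun S => ∑ x ∈ S, x) (t := Finset.range (H + 1))
    (fun S hS => by
      simp only [Finset.mem_coe, Finset.mem_filter] at hS
      simpa [Finset.mem_range] using Nat.lt_succ_of_le hS.2)]
  rw [A]
  apply Finset.sum_congr rfl
  intro n hn
  rw [Finset.mem_range] at hn
  rw [R_eq hk (by omega), Finset.filter_filter]
  congr 1
  apply Finset.filter_congr
  intro S _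
  constructor
  · intro h
    exact ⟨by omega, h⟩
  · rintro ⟨_, h⟩
    exact h
lemma fib_ge_three {k : ℕ} (hk : 3 ≤ k) : 3 ≤ Nat.fib (k + 1) := by
  have h := Nat.fib_mono (show 4 ≤ k + 1 by omega)
  have h4 : Nat.fib 4 = 3 := by decide
  omega

lemma Q2rec {k : ℕ} (hk : 3 ≤ k) :
    Ncnt (k+2) (Nat.fib (k+3) - 3) + 1 = 2^k + Ncnt k (Nat.fib (k+1) - 3) := by
  have e1 : k+1+1 = k+2 := by ring
  have e2 : k+1+2 = k+3 := by ring
  have hfb : Nat.fib (k+3) = Nat.fib (k+1) + Nat.fib (k+2) := by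
    have h := Nat.fib_add_two (n := k+1); rw [e2, e1] at h; exact h
  have hfa : Nat.fib (k+2) = Nat.fib k + Nat.fib (k+1) := Nat.fib_add_two
  have h3 : 3 ≤ Nat.fib (k+1) := fib_ge_three hk
  have hBle : Nat.fib (k+2) ≤ Nat.fib (k+3) - 3 := by omega
  have s1 : Ncnt (k+2) (Nat.fib (k+3) - 3)
      = Ncnt (k+1) (Nat.fib (k+3) - 3)
        + Ncnt (k+1) (Nat.fib (k+3) - 3 - Nat.fib (k+2)) :=
    Ncnt_succ_of_le (by omega) hBle
  have harg : Nat.fib (k+3) - 3 - Nat.fib (k+2) = Nat.fib (k+1) - 3 := by omega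
  rw [harg] at s1
  have s2 : Ncnt (k+1) (Nat.fib (k+1) - 3) = Ncnt k (Nat.fib (k+1) - 3) :=
    Ncnt_succ_of_lt (by omega) (by omega)
  have hBc : (Nat.fib (k+3) - 3) + 3 ≤ Nat.fib (k+3) := by omega
  have s3 : Ncnt (k+1) (Nat.fib (k+3) - 3)
      + Ncnt (k+1) (Nat.fib (k+3) - 3 - (Nat.fib (k+3) - 3)) = 2 ^ k :=
    Ncnt_compl (by omega) hBc
  have hz : Nat.fib (k+3) - 3 - (Nat.fib (k+3) - 3) = 0 := by omega
  rw [hz, Ncnt_zero] at s3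
  omega

lemma Prec {k : ℕ} (hk : 3 ≤ k) :
    Ncnt (k+2) (Nat.fib (k+2)) + Ncnt k (Nat.fib (k+1) - 3) = 2^k + 1 := by
  have e1 : k+1+1 = k+2 := by ring
  have e2 : k+1+2 = k+3 := by ring
  have hfb : Nat.fib (k+3) = Nat.fib (k+1) + Nat.fib (k+2) := by
    have h := Nat.fib_add_two (n := k+1); rw [e2, e1] at h; exact h
  have h3 : 3 ≤ Nat.fib (k+1) := fib_ge_three hk
  have s1 : Ncnt (k+2) (Nat.fib (k+2))
      = Ncnt (k+1) (Nat.fib (k+2)) + Ncnt (k+1) (Nat.fib (k+2) - Nat.fib (k+2)) :=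
    Ncnt_succ_of_le (by omega) le_rfl
  have hz : Nat.fib (k+2) - Nat.fib (k+2) = 0 := by omega
  rw [hz, Ncnt_zero] at s1
  have hBc : Nat.fib (k+2) + 3 ≤ Nat.fib (k+3) := by omega
  have s2 : Ncnt (k+1) (Nat.fib (k+2))
      + Ncnt (k+1) (Nat.fib (k+3) - 3 - Nat.fib (k+2)) = 2 ^ k :=
    Ncnt_compl (by omega) hBc
  have harg : Nat.fib (k+3) - 3 - Nat.fib (k+2) = Nat.fib (k+1) - 3 := by omega
  rw [harg] at s2
  have s3 : Ncnt (k+1) (Nat.fib (k+1) - 3) = Ncnt k (Nat.fib (k+1) - 3) :=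
    Ncnt_succ_of_lt (by omega) (by omega)
  omega

lemma gmain {k : ℕ} (hk : 3 ≤ k) :
    Ncnt (k+4) (Nat.fib (k+4) + Nat.fib (k+2)) + 2 * Ncnt k (Nat.fib (k+1) - 3)
      = 2^(k+2) + 2^k + 1 := by
  have e1 : k+1+1 = k+2 := by ring
  have e2 : k+1+2 = k+3 := by ring
  have e3 : k+2+1 = k+3 := by ring
  have e4 : k+2+2 = k+4 := by ring
  have e5 : k+3+1 = k+4 := by ring
  have e6 : k+3+2 = k+5 := by ring
  have hfb : Nat.fib (k+3) = Nat.fib (k+1) + Nat.fib (k+2) := by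
    have h := Nat.fib_add_two (n := k+1); rw [e2, e1] at h; exact h
  have hfc : Nat.fib (k+4) = Nat.fib (k+2) + Nat.fib (k+3) := by
    have h := Nat.fib_add_two (n := k+2); rw [e4, e3] at h; exact h
  have hfd : Nat.fib (k+5) = Nat.fib (k+3) + Nat.fib (k+4) := by
    have h := Nat.fib_add_two (n := k+3); rw [e6, e5] at h; exact h
  have h3 : 3 ≤ Nat.fib (k+1) := fib_ge_three hk
  have s1 : Ncnt (k+4) (Nat.fib (k+4) + Nat.fib (k+2))
      = Ncnt (k+3) (Nat.fib (k+4) + Nat.fib (k+2))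
        + Ncnt (k+3) (Nat.fib (k+4) + Nat.fib (k+2) - Nat.fib (k+4)) :=
    Ncnt_succ_of_le (by omega) (Nat.le_add_right _ _)
  have harg : Nat.fib (k+4) + Nat.fib (k+2) - Nat.fib (k+4) = Nat.fib (k+2) := by omega
  rw [harg] at s1
  have hlt : Nat.fib (k+2) < Nat.fib (k+3) := by omega
  have s2 : Ncnt (k+3) (Nat.fib (k+2)) = Ncnt (k+2) (Nat.fib (k+2)) :=
    Ncnt_succ_of_lt (by omega) hlt
  have hBc : Nat.fib (k+4) + Nat.fib (k+2) + 3 ≤ Nat.fib (k+5) := by omega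
  have s3 : Ncnt (k+3) (Nat.fib (k+4) + Nat.fib (k+2))
      + Ncnt (k+3) (Nat.fib (k+5) - 3 - (Nat.fib (k+4) + Nat.fib (k+2))) = 2 ^ (k+2) :=
    Ncnt_compl (by omega) hBc
  have harg2 : Nat.fib (k+5) - 3 - (Nat.fib (k+4) + Nat.fib (k+2)) = Nat.fib (k+1) - 3 := by
    omega
  rw [harg2] at s3
  have s4 : Ncnt (k+3) (Nat.fib (k+1) - 3) = Ncnt k (Nat.fib (k+1) - 3) :=
    Ncnt_drop (by omega) (by omega) (by omega)
  have s5 := Prec hk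
  omega

lemma gstep {k : ℕ} (hk : 3 ≤ k) :
    Ncnt (k+6) (Nat.fib (k+6) + Nat.fib (k+4))
      = Ncnt (k+4) (Nat.fib (k+4) + Nat.fib (k+2)) + 13 * 2^k + 2 := by
  have g1 := gmain hk
  have g2 := gmain (k := k+2) (by omega)
  rw [show k+2+4 = k+6 from by ring, show k+2+2 = k+4 from by ring,
    show k+2+1 = k+3 from by ring] at g2
  have q := Q2rec hk
  have p1 : 2^(k+2) = 4 * 2^k := by ring
  have p2 : 2^(k+4) = 16 * 2^k := by ring
  rw [p1] at g1 g2
  rw [p2] at g2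
  omega
lemma A_conn {k : ℕ} (hk : 3 ≤ k) :
    A (Nat.fib (k+4) + Nat.fib (k+2)) = Ncnt (k+4) (Nat.fib (k+4) + Nat.fib (k+2)) := by
  have e3 : k+2+1 = k+3 := by ring
  have e4 : k+2+2 = k+4 := by ring
  have e5 : k+3+1 = k+4 := by ring
  have e6 : k+3+2 = k+5 := by ring
  have hfc : Nat.fib (k+4) = Nat.fib (k+2) + Nat.fib (k+3) := by
    have h := Nat.fib_add_two (n := k+2); rw [e4, e3] at h; exact h
  have hfd : Nat.fib (k+5) = Nat.fib (k+3) + Nat.fib (k+4) := by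
    have h := Nat.fib_add_two (n := k+3); rw [e6, e5] at h; exact h
  have hmono : Nat.fib (k+2) < Nat.fib (k+3) :=
    Nat.fib_strictMonoOn (by simp) (by simp) (by omega)
  have hH : Nat.fib (k+4) + Nat.fib (k+2) < Nat.fib (k+5) := by omega
  exact A_eq (by omega) hH

lemma gbound : ∀ k : ℕ, 3 ≤ k →
    |(A (Nat.fib (k+4) + Nat.fib (k+2)) : ℝ) - 13/48 * 2^(k+4)| ≤ (k : ℝ) + 4 + 512 := by
  intro k
  induction k using Nat.strong_induction_on with
  | _ k ih =>
    intro hk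
    rcases Nat.lt_or_ge k 5 with hk5 | hk5
    · -- base cases k = 3, 4 : crude bound
      have h1 : (A (Nat.fib (k+4) + Nat.fib (k+2)) : ℝ) ≤ 2^(k+4) := by
        rw [A_conn hk]
        exact_mod_cast Ncnt_le (k+4) _
      have h0 : (0:ℝ) ≤ (A (Nat.fib (k+4) + Nat.fib (k+2)) : ℝ) := Nat.cast_nonneg _
      have hp : (2:ℝ)^(k+4) ≤ 2^8 := by
        apply pow_le_pow_right₀ (by norm_num) (by omega)
      rw [abs_le]
      constructor
      · nlinarith [pow_pos (show (0:ℝ) < 2 by norm_num) (k+4)]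
      · nlinarith [pow_pos (show (0:ℝ) < 2 by norm_num) (k+4)]
    · -- inductive step
      obtain ⟨j, rfl⟩ : ∃ j, k = j + 2 := ⟨k - 2, by omega⟩
      have hj : 3 ≤ j := by omega
      have prev := ih j (by omega) hj
      have step : Ncnt (j+6) (Nat.fib (j+6) + Nat.fib (j+4))
          = Ncnt (j+4) (Nat.fib (j+4) + Nat.fib (j+2)) + 13 * 2^j + 2 := gstep hj
      have ea : j+2+4 = j+6 := by ring
      have eb : j+2+2 = j+4 := by ring
      rw [ea, eb, A_conn (by omega : 3 ≤ j+2)]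
      rw [ea, eb] at *
      rw [step]
      rw [A_conn hj] at prev
      have e64 : (2:ℝ)^(j+6) = 2^j * 64 := by rw [pow_add]; norm_num
      have e16 : (2:ℝ)^(j+4) = 2^j * 16 := by rw [pow_add]; norm_num
      have hre : ((Ncnt (j+4) (Nat.fib (j+4) + Nat.fib (j+2)) + 13 * 2^j + 2 : ℕ) : ℝ)
            - 13/48 * 2^(j+6)
          = ((Ncnt (j+4) (Nat.fib (j+4) + Nat.fib (j+2)) : ℝ) - 13/48 * 2^(j+4)) + 2 := by
        push_cast
        rw [e64, e16]
        ring
      rw [hre]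
      calc |((Ncnt (j+4) (Nat.fib (j+4) + Nat.fib (j+2)) : ℝ) - 13/48 * 2^(j+4)) + 2|
          ≤ |(Ncnt (j+4) (Nat.fib (j+4) + Nat.fib (j+2)) : ℝ) - 13/48 * 2^(j+4)| + |2| :=
            abs_add_le _ _
        _ ≤ ((j:ℝ) + 4 + 512) + |2| := by gcongr
        _ ≤ (j:ℝ) + 2 + 4 + 512 := by
            rw [abs_of_pos (by norm_num : (0:ℝ) < 2)]
            linarith
        _ = ((j:ℝ) + 2) + 4 + 512 := by ring
      push_cast
      linarith [le_refl (0:ℝ)]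
lemma limit1 :
    Tendsto (fun m : ℕ => (A (Nat.fib m + Nat.fib (m - 2)) : ℝ) / 2 ^ m) atTop
      (𝓝 (13 / 48)) := by
  rw [← tendsto_sub_nhds_zero_iff]
  apply squeeze_zero_norm' (a := fun m : ℕ => ((m : ℝ) + 512) / 2 ^ m)
  · filter_upwards [eventually_ge_atTop 7] with m hm
    obtain ⟨k, rfl⟩ : ∃ k, m = k + 4 := ⟨m - 4, by omega⟩
    have hk : 3 ≤ k := by omega
    have hsub : k + 4 - 2 = k + 2 := by omega
    rw [hsub]
    have hb := gbound k hk
    have hpow : (0:ℝ) < 2 ^ (k + 4) := by positivity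
    rw [Real.norm_eq_abs]
    have he : (A (Nat.fib (k+4) + Nat.fib (k+2)) : ℝ) / 2 ^ (k+4) - 13 / 48
        = ((A (Nat.fib (k+4) + Nat.fib (k+2)) : ℝ) - 13 / 48 * 2 ^ (k+4)) / 2 ^ (k+4) := by
      field_simp
    rw [he, abs_div, abs_of_pos hpow]
    have hc : ((k + 4 : ℕ) : ℝ) + 512 = (k : ℝ) + 4 + 512 := by push_cast; ring
    rw [hc]
    gcongr
  · have h1 : Tendsto (fun n : ℕ => (n : ℝ) * (1/2) ^ n) atTop (𝓝 0) :=
      tendsto_self_mul_const_pow_of_lt_one (by norm_num) (by norm_num)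
    have h2 : Tendsto (fun n : ℕ => ((1:ℝ)/2) ^ n * 512) atTop (𝓝 0) := by
      have := tendsto_pow_atTop_nhds_zero_of_lt_one
        (show (0:ℝ) ≤ 1/2 by norm_num) (by norm_num)
      simpa using this.mul_const (512:ℝ)
    have h3 := h1.add h2
    rw [add_zero] at h3
    apply h3.congr
    intro n
    have hp : ((1:ℝ)/2) ^ n = 1 / 2 ^ n := by rw [div_pow]; norm_num
    rw [hp]
    ring

end FibAux

/-- `A(F_m + F_{m-2}) ~ (13/48)·2^m`, and hence `A(F_m+F_{m-2})/(F_m+F_{m-2})^λ → 13/24`. -/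
theorem summatory_fib_sum_asymptotic (φ lam : ℝ)
    (hφ : φ = (1 + Real.sqrt 5) / 2)
    (hlam : lam = Real.log 2 / Real.log φ) :
    Tendsto (fun m : ℕ => (A (Nat.fib m + Nat.fib (m - 2)) : ℝ) / 2 ^ m) atTop
      (𝓝 (13 / 48)) ∧
    Tendsto (fun m : ℕ =>
        (A (Nat.fib m + Nat.fib (m - 2)) : ℝ) /
          ((Nat.fib m + Nat.fib (m - 2) : ℕ) : ℝ) ^ lam) atTop
      (𝓝 (13 / 24)) := by
  
  have hgold : Real.goldenRatio = (1 + Real.sqrt 5) / 2 := rfl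
  have hgoldc : Real.goldenConj = (1 - Real.sqrt 5) / 2 := rfl
  have hφg : φ = Real.goldenRatio := by rw [hφ, hgold]
  have hlam' : lam = Real.log 2 / Real.log Real.goldenRatio := by rw [hlam, hφg]
  refine ⟨limit1, ?_⟩
  have hs5 : Real.sqrt 5 * Real.sqrt 5 = 5 :=
    Real.mul_self_sqrt (by norm_num)
  have hsne : Real.sqrt 5 ≠ 0 := by positivity
  have key1 : Real.goldenRatio * Real.goldenRatio + 1 = Real.sqrt 5 * Real.goldenRatio := by
    rw [hgold]
    linear_combination (-1/4 : ℝ) * hs5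
  have key2 : Real.goldenConj * Real.goldenConj + 1 = -(Real.sqrt 5 * Real.goldenConj) := by
    rw [hgoldc]
    linear_combination (-1/4 : ℝ) * hs5
  have binet : ∀ j : ℕ, ((Nat.fib (j+2) + Nat.fib j : ℕ) : ℝ)
      = Real.goldenRatio ^ (j+1) + Real.goldenConj ^ (j+1) := by
    intro j
    push_cast
    rw [Real.coe_fib_eq, Real.coe_fib_eq, ← add_div, div_eq_iff hsne]
    linear_combination (Real.goldenRatio ^ j) * key1 - (Real.goldenConj ^ j) * key2
  have hpl : Real.goldenRatio ^ lam = 2 := by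
    rw [Real.rpow_def_of_pos Real.goldenRatio_pos, hlam']
    have hl : Real.log Real.goldenRatio ≠ 0 := ne_of_gt (Real.log_pos Real.one_lt_goldenRatio)
    have : Real.log Real.goldenRatio * (Real.log 2 / Real.log Real.goldenRatio) = Real.log 2 := by
      field_simp
    rw [this, Real.exp_log (by norm_num)]
  have hratio : |Real.goldenConj / Real.goldenRatio| < 1 := by
    rw [abs_div, div_lt_one (abs_pos.mpr (ne_of_gt Real.goldenRatio_pos))]
    have h1 : |Real.goldenConj| < 1 :=
      abs_lt.mpr ⟨Real.neg_one_lt_goldenConj, by linarith [Real.goldenConj_neg]⟩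
    have h2 : (1:ℝ) ≤ |Real.goldenRatio| := by
      rw [abs_of_pos Real.goldenRatio_pos]; linarith [Real.one_lt_goldenRatio]
    linarith
  have hx0 : Tendsto (fun m : ℕ => (Real.goldenConj / Real.goldenRatio) ^ (m - 1)) atTop (𝓝 0) := by
    have hg : Tendsto (fun m : ℕ => m - 1) atTop atTop :=
      tendsto_atTop_atTop_of_monotone (fun a b h => Nat.sub_le_sub_right h 1)
        (fun b => ⟨b + 1, by omega⟩)
    have hp : Tendsto (fun n : ℕ => (Real.goldenConj / Real.goldenRatio) ^ n) atTop (𝓝 0) :=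
      tendsto_pow_atTop_nhds_zero_of_norm_lt_one (by rwa [Real.norm_eq_abs])
    exact hp.comp hg
  have hone : Tendsto
      (fun m : ℕ => (1 + (Real.goldenConj / Real.goldenRatio) ^ (m - 1)) ^ lam) atTop (𝓝 1) := by
    have h1 : Tendsto (fun m : ℕ => 1 + (Real.goldenConj / Real.goldenRatio) ^ (m - 1)) atTop (𝓝 1) := by
      have := tendsto_const_nhds (x := (1:ℝ)) (f := atTop (α := ℕ))
      simpa using this.add hx0
    have h2 : ContinuousAt (fun y : ℝ => y ^ lam) 1 :=
      Real.continuousAt_rpow_const 1 lam (Or.inl one_ne_zero)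
    have h3 := h2.tendsto.comp h1
    rw [Real.one_rpow] at h3
    exact h3
  have hmain2 : Tendsto (fun m : ℕ =>
      (A (Nat.fib m + Nat.fib (m - 2)) : ℝ) / 2 ^ m
        * (2 / (1 + (Real.goldenConj / Real.goldenRatio) ^ (m - 1)) ^ lam)) atTop (𝓝 (13 / 24)) := by
    have h := limit1.mul ((tendsto_const_nhds (x := (2:ℝ))).div hone one_ne_zero)
    norm_num at h
    exact h
  apply hmain2.congr'
  filter_upwards [eventually_ge_atTop 7] with m hm
  obtain ⟨j, rfl⟩ : ∃ j, m = j + 2 := ⟨m - 2, by omega⟩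
  have e1 : j + 2 - 2 = j := by omega
  have e2 : j + 2 - 1 = j + 1 := by omega
  rw [e1, e2]
  set x := (Real.goldenConj / Real.goldenRatio) ^ (j + 1) with hxdef
  have hxlt : |x| < 1 := by
    rw [hxdef, abs_pow]
    exact pow_lt_one₀ (abs_nonneg _) hratio (by omega)
  have hxpos : 0 < 1 + x := by
    have := abs_lt.mp hxlt
    linarith [this.1]
  have hφne : Real.goldenRatio ^ (j+1) ≠ 0 := pow_ne_zero _ (ne_of_gt Real.goldenRatio_pos)
  have hN : ((Nat.fib (j+2) + Nat.fib j : ℕ) : ℝ) = Real.goldenRatio ^ (j+1) * (1 + x) := by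
    rw [binet j, hxdef, div_pow Real.goldenConj Real.goldenRatio]
    rw [mul_add, mul_one, mul_div_cancel₀ _ hφne]
  have hNpow : ((Nat.fib (j+2) + Nat.fib j : ℕ) : ℝ) ^ lam = 2 ^ (j+1) * (1 + x) ^ lam := by
    rw [hN, Real.mul_rpow (by positivity) (le_of_lt hxpos)]
    congr 1
    calc (Real.goldenRatio ^ (j+1) : ℝ) ^ lam
        = (Real.goldenRatio ^ ((j+1 : ℕ) : ℝ)) ^ lam := by rw [Real.rpow_natCast]
      _ = Real.goldenRatio ^ (((j+1 : ℕ) : ℝ) * lam) := (Real.rpow_mul Real.goldenRatio_pos.le _ _).symm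
      _ = Real.goldenRatio ^ (lam * ((j+1 : ℕ) : ℝ)) := by rw [mul_comm]
      _ = (Real.goldenRatio ^ lam) ^ ((j+1 : ℕ) : ℝ) := Real.rpow_mul Real.goldenRatio_pos.le _ _
      _ = (2:ℝ) ^ ((j+1 : ℕ) : ℝ) := by rw [hpl]
      _ = 2 ^ (j+1) := Real.rpow_natCast 2 (j+1)
  rw [hNpow]
  have hxlam : (0:ℝ) < (1 + x) ^ lam := Real.rpow_pos_of_pos hxpos _
  have h2p : ((2:ℝ)) ^ (j+2) = 2 * 2 ^ (j+1) := by ring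
  rw [h2p]
  field_simp
end
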